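/- Let X be a GT space and let (x_n)_{n∈ℕ} together with (x_n*)_{n∈ℕ} be a basis of X with the bounded restricted truncation operator property. Then there exist constants 0<c≤C<∞ such that c·m ≤ φ_l(m) and φ_u(m) ≤ C·m for every m ≥ 1; in particular, the basis is democratic. -/

import Mathlib

open scoped BigOperators ENNReal

/-- `X` is a GT space: every bounded operator into `ℓ_2` is absolutely summing,
with the absolutely summing norm controlled by `D·‖T‖`. -/
def IsGTSpace (X : Type*) [NormedAddCommGroup X] [NormedSpace ℝ X] : Prop :=
  ∃ D : ℝ, ∀ T : X →L[ℝ] lp (fun _ : ℕ => ℝ) 2, ∀ (B : Finset ℕ) (f : ℕ → X),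
    ∃ ε : ℕ → ℝ, (∀ k, ε k = 1 ∨ ε k = -1) ∧
      ∑ k ∈ B, ‖T (f k)‖ ≤ D * ‖T‖ * ‖∑ k ∈ B, ε k • f k‖

/-- `A` is a greedy set for the coefficient sequence `coef`. -/
def GreedySet (coef : ℕ → ℝ) (A : Finset ℕ) : Prop :=
  ∀ n ∈ A, ∀ k ∉ A, |coef k| ≤ |coef n|

/-- `(x_n)` together with bounded linear functionals `(x_n^*)` is a
(semi-normalized, fundamental, M-bounded Markushevich) basis of `X`. -/
structure IsXBasis {X : Type*} [NormedAddCommGroup X] [NormedSpace ℝ X]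
    (x : ℕ → X) (xs : ℕ → X →L[ℝ] ℝ) : Prop where
  biorth : ∀ m n, xs m (x n) = if m = n then (1 : ℝ) else 0
  dense : ∀ f : X, ∀ ε > 0, ∃ (A : Finset ℕ) (c : ℕ → ℝ), ‖f - ∑ n ∈ A, c n • x n‖ < ε
  norm_lb : ∃ c > 0, ∀ n, c ≤ ‖x n‖
  norm_ub : ∃ C : ℝ, ∀ n, ‖x n‖ ≤ C
  dual_ub : ∃ b : ℝ, ∀ n, ‖xs n‖ ≤ b

/-- The sign function, with the convention `sgn 0 = 1`. -/
noncomputable def sgn (a : ℝ) : ℝ := if a = 0 then 1 else a / |a|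

/-- The basis has the bounded restricted truncation operator property:
`‖U(f,A)‖ ≤ C₀·‖f‖` for every greedy set `A` of `f`, where
`U(f,A) = (min_{n∈A} |x_n^*(f)|)·∑_{n∈A} sgn(x_n^*(f))·x_n`. -/
def BRTP {X : Type*} [NormedAddCommGroup X] [NormedSpace ℝ X]
    (x : ℕ → X) (xs : ℕ → X →L[ℝ] ℝ) : Prop :=
  ∃ C₀ ≥ (1 : ℝ), ∀ (f : X) (A : Finset ℕ) (h : A.Nonempty),
    GreedySet (fun n => xs n f) A →
    ‖(A.inf' h fun n => |xs n f|) • ∑ n ∈ A, sgn (xs n f) • x n‖ ≤ C₀ * ‖f‖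

/-- The basis is quasi-greedy: greedy projections are uniformly bounded. -/
def QuasiGreedyX {X : Type*} [NormedAddCommGroup X] [NormedSpace ℝ X]
    (x : ℕ → X) (xs : ℕ → X →L[ℝ] ℝ) : Prop :=
  ∃ C₀ ≥ (1 : ℝ), ∀ (f : X) (A : Finset ℕ), GreedySet (fun n => xs n f) A →
    ‖∑ n ∈ A, xs n f • x n‖ ≤ C₀ * ‖f‖

-- combinatorial rearrangement lemma
lemma comb (u : ℕ → ℝ) (hmono : ∀ i j, 1 ≤ i → i ≤ j → u j ≤ u i)
    (ρ : ℕ → ℕ) :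
    ∀ (A : Finset ℕ), (∀ n ∈ A, 1 ≤ ρ n) →
      (∀ j, (A.filter fun n => ρ n ≤ j).card ≤ j) →
      ∑ n ∈ A, u (ρ n) ≤ ∑ j ∈ Finset.Icc 1 A.card, u j := by
  intro A
  induction A using Finset.strongInduction with
  | _ A ih =>
    intro hρ1 hP
    rcases A.eq_empty_or_nonempty with rfl | hA
    · simp
    · obtain ⟨n₀, hn₀, hmax⟩ := A.exists_max_image ρ hA
      have hfilt : A = A.filter (fun n => ρ n ≤ ρ n₀) := by
        rw [eq_comm, Finset.filter_eq_self]
        exact fun n hn => hmax n hn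
      have hcard : A.card ≤ ρ n₀ := by
        calc A.card = (A.filter (fun n => ρ n ≤ ρ n₀)).card := by rw [← hfilt]
          _ ≤ ρ n₀ := hP (ρ n₀)
      have hcard1 : 1 ≤ A.card := Finset.card_pos.mpr hA
      obtain ⟨k, hk⟩ : ∃ k, A.card = k + 1 := ⟨A.card - 1, by omega⟩
      have herase : (A.erase n₀).card = k := by
        rw [Finset.card_erase_of_mem hn₀, hk]; omega
      have hsub : A.erase n₀ ⊂ A := Finset.erase_ssubset hn₀
      have ihe := ih (A.erase n₀) hsub
        (fun n hn => hρ1 n (Finset.mem_of_mem_erase hn))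
        (fun j => le_trans (Finset.card_le_card
          (Finset.filter_subset_filter _ (Finset.erase_subset _ _))) (hP j))
      rw [herase] at ihe
      have hstep : ∑ n ∈ A, u (ρ n) = u (ρ n₀) + ∑ n ∈ A.erase n₀, u (ρ n) :=
        (Finset.add_sum_erase A (fun n => u (ρ n)) hn₀).symm
      have hlast : u (ρ n₀) ≤ u A.card := hmono A.card (ρ n₀) hcard1 hcard
      have hIcc : ∑ j ∈ Finset.Icc 1 A.card, u j
          = ∑ j ∈ Finset.Icc 1 k, u j + u (k+1) := by
        rw [hk]
        exact Finset.sum_Icc_succ_top (by omega) u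
      rw [hstep, hIcc]
      have : u (ρ n₀) ≤ u (k+1) := by rw [← hk]; exact hlast
      linarith [ihe]

-- harmonic sum
lemma sum_one_div_le (m : ℕ) : ∑ j ∈ Finset.Icc 1 m, (1:ℝ)/j ≤ 2 * Real.sqrt m := by
  induction m with
  | zero => simp
  | succ m ih =>
    rw [Finset.sum_Icc_succ_top (by omega)]
    have key : (1:ℝ)/(m+1) ≤ 2 * Real.sqrt (m+1) - 2 * Real.sqrt m := by
      set a := Real.sqrt ((m:ℝ)+1) with ha
      set b := Real.sqrt (m:ℝ) with hbdef
      have ha2 : a^2 = (m:ℝ)+1 := Real.sq_sqrt (by positivity)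
      have hb2 : b^2 = (m:ℝ) := Real.sq_sqrt (by positivity)
      have hb0 : 0 ≤ b := Real.sqrt_nonneg _
      have ha0 : 0 ≤ a := Real.sqrt_nonneg _
      have ha1 : 1 ≤ a := by nlinarith
      have hab : b ≤ a := by
        apply Real.sqrt_le_sqrt; push_cast; linarith
      rw [show ((m:ℝ)+1) = a^2 by rw [ha2]]
      rw [div_le_iff₀ (by positivity)]
      nlinarith [sq_nonneg (a - b), sq_nonneg (a + b), mul_nonneg hb0 (sq_nonneg (a-b))]
    push_cast
    push_cast at ih
    linarith

-- 3/2-series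
lemma sum_pow32_le_aux : ∀ m : ℕ, 1 ≤ m →
    ∑ j ∈ Finset.Icc 1 m, 1/((j:ℝ) * Real.sqrt j) ≤ 3 - 2 / Real.sqrt m := by
  intro m hm
  induction m with
  | zero => omega
  | succ m ih =>
    rcases Nat.eq_or_lt_of_le hm with h1 | h2
    · rw [← h1]
      norm_num
    · have hm1 : 1 ≤ m := by omega
      have ih' := ih hm1
      rw [Finset.sum_Icc_succ_top (by omega)]
      have key : 1/(((m:ℝ)+1) * Real.sqrt ((m:ℝ)+1)) ≤ 2 / Real.sqrt m - 2 / Real.sqrt ((m:ℝ)+1) := by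
        set a := Real.sqrt ((m:ℝ)+1) with ha
        set b := Real.sqrt (m:ℝ) with hbdef
        have ha2 : a^2 = (m:ℝ)+1 := Real.sq_sqrt (by positivity)
        have hb2 : b^2 = (m:ℝ) := Real.sq_sqrt (by positivity)
        have hb0 : 0 ≤ b := Real.sqrt_nonneg _
        have hm1' : (1:ℝ) ≤ (m:ℝ) := by exact_mod_cast hm1
        have hb1 : 1 ≤ b := by nlinarith
        have hab : b ≤ a := by
          apply Real.sqrt_le_sqrt; push_cast; linarith
        have ha1 : 1 ≤ a := le_trans hb1 hab
        rw [show ((m:ℝ)+1) = a^2 by rw [ha2]]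
        rw [div_sub_div _ _ (by positivity) (by positivity), div_le_div_iff₀ (by positivity) (by positivity)]
        nlinarith [sq_nonneg (a-b), mul_nonneg (mul_nonneg (le_trans zero_le_one hb1) (le_trans zero_le_one ha1)) (sq_nonneg (a-b)), mul_nonneg (sub_nonneg.mpr hab) (sq_nonneg a), mul_nonneg (sub_nonneg.mpr hab) (sq_nonneg b)]
      push_cast
      push_cast at ih'
      linarith

lemma sum_pow32_le (m : ℕ) : ∑ j ∈ Finset.Icc 1 m, 1/((j:ℝ) * Real.sqrt j) ≤ 3 := by
  rcases Nat.eq_zero_or_pos m with rfl | hm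
  · simp
  · have h := sum_pow32_le_aux m hm
    have : 0 ≤ 2 / Real.sqrt m := by positivity
    linarith


lemma sgn_one : sgn 1 = 1 := by norm_num [sgn]
lemma sgn_neg_one : sgn (-1) = -1 := by norm_num [sgn]
lemma sgn_cases (a : ℝ) : sgn a = 1 ∨ sgn a = -1 := by
  rcases eq_or_ne a 0 with h | h
  · left; simp [sgn, h]
  · rcases lt_or_gt_of_ne h with hl | hl
    · right; rw [sgn, if_neg h, abs_of_neg hl]; field_simp
    · left; rw [sgn, if_neg h, abs_of_pos hl]; field_simp


section
variable {X : Type*} [NormedAddCommGroup X] [NormedSpace ℝ X]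
variable {x : ℕ → X} {xs : ℕ → X →L[ℝ] ℝ}

lemma coef_sum (hb : ∀ m n, xs m (x n) = if m = n then (1:ℝ) else 0)
    (A : Finset ℕ) (c : ℕ → ℝ) (k : ℕ) :
    xs k (∑ n ∈ A, c n • x n) = if k ∈ A then c k else 0 := by
  rw [map_sum]
  simp only [map_smul, hb, smul_eq_mul, mul_ite, mul_one, mul_zero]
  exact Finset.sum_ite_eq A k c

-- L1 : subsets of constant-sign sums
lemma L1 (hb : ∀ m n, xs m (x n) = if m = n then (1:ℝ) else 0)
    {C₀ : ℝ} (hC₀ : 1 ≤ C₀)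
    (htr : ∀ (f : X) (A : Finset ℕ) (h : A.Nonempty),
      GreedySet (fun n => xs n f) A →
      ‖(A.inf' h fun n => |xs n f|) • ∑ n ∈ A, sgn (xs n f) • x n‖ ≤ C₀ * ‖f‖)
    (B Λ : Finset ℕ) (hBΛ : B ⊆ Λ) :
    ‖∑ n ∈ B, x n‖ ≤ C₀ * ‖∑ n ∈ Λ, x n‖ := by
  rcases B.eq_empty_or_nonempty with rfl | hB
  · simp
    exact mul_nonneg (le_trans zero_le_one hC₀) (norm_nonneg _)
  · set f : X := ∑ n ∈ Λ, x n with hf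
    have hcoef : ∀ k, xs k f = if k ∈ Λ then (1:ℝ) else 0 := by
      intro k
      have hrw : f = ∑ n ∈ Λ, (1:ℝ) • x n := by rw [hf]; simp
      rw [hrw]
      simpa using coef_sum hb Λ (fun _ => (1:ℝ)) k
    have habs : ∀ k, |xs k f| ≤ 1 := by
      intro k; rw [hcoef]; split <;> norm_num
    have hgr : GreedySet (fun n => xs n f) B := by
      intro n hn k _
      simp only
      rw [hcoef n, if_pos (hBΛ hn)]
      simpa using habs k
    have h1 : ∀ n ∈ B, |xs n f| = 1 := by
      intro n hn; rw [hcoef n, if_pos (hBΛ hn)]; norm_num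
    have hinf : (B.inf' hB fun n => |xs n f|) = 1 := by
      rw [Finset.inf'_congr hB rfl h1]
      exact Finset.inf'_const hB 1
    have hsum : ∑ n ∈ B, sgn (xs n f) • x n = ∑ n ∈ B, x n := by
      apply Finset.sum_congr rfl
      intro n hn
      rw [hcoef n, if_pos (hBΛ hn), sgn_one, one_smul]
    have := htr f B hB hgr
    rw [hinf, hsum, one_smul] at this
    exact this

-- L2 : sign comparison
lemma L2 (hb : ∀ m n, xs m (x n) = if m = n then (1:ℝ) else 0)
    {C₀ : ℝ} (hC₀ : 1 ≤ C₀)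
    (htr : ∀ (f : X) (A : Finset ℕ) (h : A.Nonempty),
      GreedySet (fun n => xs n f) A →
      ‖(A.inf' h fun n => |xs n f|) • ∑ n ∈ A, sgn (xs n f) • x n‖ ≤ C₀ * ‖f‖)
    (A : Finset ℕ) (ε : ℕ → ℝ) (hε : ∀ n, ε n = 1 ∨ ε n = -1) :
    ‖∑ n ∈ A, x n‖ ≤ 2 * C₀ * ‖∑ n ∈ A, ε n • x n‖ := by
  set f : X := ∑ n ∈ A, ε n • x n with hf
  have hcoef : ∀ k, xs k f = if k ∈ A then ε k else 0 := fun k => coef_sum hb A ε k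
  have habs : ∀ k, |xs k f| ≤ 1 := by
    intro k; rw [hcoef]
    split
    · rcases hε k with h | h <;> rw [h] <;> norm_num
    · norm_num
  have key : ∀ (s : ℝ), s = 1 ∨ s = -1 →
      ‖∑ n ∈ A.filter (fun n => ε n = s), x n‖ ≤ C₀ * ‖f‖ := by
    intro s hs
    set B := A.filter (fun n => ε n = s) with hBdef
    rcases B.eq_empty_or_nonempty with hBe | hB
    · rw [hBe]
      simp
      exact mul_nonneg (le_trans zero_le_one hC₀) (norm_nonneg _)
    · have hmem : ∀ n ∈ B, xs n f = s := by
        intro n hn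
        rw [hcoef n, if_pos (Finset.mem_filter.mp hn).1]
        exact (Finset.mem_filter.mp hn).2
      have h1 : ∀ n ∈ B, |xs n f| = 1 := by
        intro n hn; rw [hmem n hn]
        rcases hs with h | h <;> rw [h] <;> norm_num
      have hgr : GreedySet (fun n => xs n f) B := by
        intro n hn k _
        simp only
        rw [show |xs n f| = 1 from h1 n hn]
        exact habs k
      have hinf : (B.inf' hB fun n => |xs n f|) = 1 := by
        rw [Finset.inf'_congr hB rfl h1]
        exact Finset.inf'_const hB 1
      have hsgn : ∀ n ∈ B, sgn (xs n f) = s := by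
        intro n hn; rw [hmem n hn]
        rcases hs with h | h <;> rw [h]
        · exact sgn_one
        · exact sgn_neg_one
      have hsum : ∑ n ∈ B, sgn (xs n f) • x n = s • ∑ n ∈ B, x n := by
        rw [Finset.smul_sum]
        exact Finset.sum_congr rfl fun n hn => by rw [hsgn n hn]
      have := htr f B hB hgr
      rw [hinf, hsum, one_smul, norm_smul] at this
      have hs1 : ‖s‖ = 1 := by rcases hs with h | h <;> rw [h] <;> norm_num
      rwa [hs1, one_mul] at this
  have hsplit : ∑ n ∈ A, x n
      = ∑ n ∈ A.filter (fun n => ε n = 1), x n + ∑ n ∈ A.filter (fun n => ¬ (ε n = 1)), x n :=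
    (Finset.sum_filter_add_sum_filter_not A _ _).symm
  have hneg : A.filter (fun n => ¬ (ε n = 1)) = A.filter (fun n => ε n = -1) := by
    apply Finset.filter_congr
    intro n _
    rcases hε n with h | h <;> norm_num [h]
  calc ‖∑ n ∈ A, x n‖
      ≤ ‖∑ n ∈ A.filter (fun n => ε n = 1), x n‖
        + ‖∑ n ∈ A.filter (fun n => ¬ (ε n = 1)), x n‖ := by rw [hsplit]; exact norm_add_le _ _
    _ ≤ C₀ * ‖f‖ + C₀ * ‖f‖ := by
        apply add_le_add (key 1 (Or.inl rfl))
        rw [hneg]; exact key (-1) (Or.inr rfl)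
    _ = 2 * C₀ * ‖f‖ := by ring


-- L3 : weak-type estimate
lemma L3 (hb : ∀ m n, xs m (x n) = if m = n then (1:ℝ) else 0)
    (hdense : ∀ f : X, ∀ ε > 0, ∃ (A : Finset ℕ) (c : ℕ → ℝ), ‖f - ∑ n ∈ A, c n • x n‖ < ε)
    {bd : ℝ} (hbd : ∀ n, ‖xs n‖ ≤ bd)
    {C₀ : ℝ} (hC₀ : 1 ≤ C₀)
    (htr : ∀ (f : X) (A : Finset ℕ) (h : A.Nonempty),
      GreedySet (fun n => xs n f) A →
      ‖(A.inf' h fun n => |xs n f|) • ∑ n ∈ A, sgn (xs n f) • x n‖ ≤ C₀ * ‖f‖)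
    (g : X) (t : ℝ) (ht : 0 < t) (S : Finset ℕ) (hS : ∀ n ∈ S, t ≤ |xs n g|) :
    t * ‖∑ n ∈ S, x n‖ ≤ 2 * C₀ ^ 3 * ‖g‖ := by
  have hC₀0 : (0:ℝ) < C₀ := lt_of_lt_of_le one_pos hC₀
  rcases S.eq_empty_or_nonempty with rfl | hSne
  · simp
    positivity
  · set b' : ℝ := max bd 1 with hb'
    have hb'pos : (0:ℝ) < b' := lt_of_lt_of_le one_pos (le_max_right _ _)
    obtain ⟨F, cc, hp⟩ := hdense g (t / (2 * b')) (by positivity)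
    set p : X := ∑ n ∈ F, cc n • x n with hpdef
    have hsmall : ∀ n, n ∉ F → |xs n g| ≤ t / 2 := by
      intro n hn
      have h0 : xs n p = 0 := by
        rw [hpdef, coef_sum hb, if_neg hn]
      have : xs n g = xs n (g - p) + xs n p := by rw [map_sub]; ring
      rw [this, h0, add_zero]
      calc |xs n (g - p)| ≤ ‖xs n‖ * ‖g - p‖ := (xs n).le_opNorm _
        _ ≤ b' * (t / (2 * b')) := by
            apply mul_le_mul (le_trans (hbd n) (le_max_left _ _)) (le_of_lt hp)
              (norm_nonneg _) (le_of_lt hb'pos)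
        _ = t / 2 := by field_simp
    set Λ : Finset ℕ := F.filter (fun k => t ≤ |xs k g|) with hΛ
    have hSΛ : S ⊆ Λ := by
      intro n hn
      rw [hΛ, Finset.mem_filter]
      refine ⟨?_, hS n hn⟩
      by_contra hnF
      have := hsmall n hnF
      have := hS n hn
      linarith
    have hΛne : Λ.Nonempty := hSne.mono hSΛ
    have hΛt : ∀ n ∈ Λ, t ≤ |xs n g| := fun n hn => (Finset.mem_filter.mp hn).2
    have hgr : GreedySet (fun n => xs n g) Λ := by
      intro n hn k hk
      simp only
      have hn' := hΛt n hn
      by_cases hkF : k ∈ F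
      · have : ¬ t ≤ |xs k g| := by
          intro h
          exact hk (Finset.mem_filter.mpr ⟨hkF, h⟩)
        linarith
      · have := hsmall k hkF
        linarith
    have htr' := htr g Λ hΛne hgr
    set W : X := ∑ n ∈ Λ, sgn (xs n g) • x n with hW
    have hinf : t ≤ Λ.inf' hΛne fun n => |xs n g| := Finset.le_inf' _ _ hΛt
    have hinfW : (Λ.inf' hΛne fun n => |xs n g|) * ‖W‖ ≤ C₀ * ‖g‖ := by
      have h0 : (0:ℝ) ≤ Λ.inf' hΛne fun n => |xs n g| := le_trans (le_of_lt ht) hinf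
      rw [norm_smul, Real.norm_eq_abs, abs_of_nonneg h0] at htr'
      exact htr'
    have htW : t * ‖W‖ ≤ C₀ * ‖g‖ :=
      le_trans (mul_le_mul_of_nonneg_right hinf (norm_nonneg _)) hinfW
    have hL2 : ‖∑ n ∈ Λ, x n‖ ≤ 2 * C₀ * ‖W‖ :=
      L2 hb hC₀ htr Λ (fun n => sgn (xs n g)) (fun n => sgn_cases _)
    have hL1 : ‖∑ n ∈ S, x n‖ ≤ C₀ * ‖∑ n ∈ Λ, x n‖ := L1 hb hC₀ htr S Λ hSΛ
    calc t * ‖∑ n ∈ S, x n‖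
        ≤ t * (C₀ * (2 * C₀ * ‖W‖)) := by
          apply mul_le_mul_of_nonneg_left _ (le_of_lt ht)
          exact le_trans hL1 (mul_le_mul_of_nonneg_left hL2 (le_of_lt hC₀0))
      _ = 2 * C₀ ^ 2 * (t * ‖W‖) := by ring
      _ ≤ 2 * C₀ ^ 2 * (C₀ * ‖g‖) := by
          apply mul_le_mul_of_nonneg_left htW
          positivity
      _ = 2 * C₀ ^ 3 * ‖g‖ := by ring


lemma L2b (hb : ∀ m n, xs m (x n) = if m = n then (1:ℝ) else 0)
    {C₀ : ℝ} (hC₀ : 1 ≤ C₀)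
    (htr : ∀ (f : X) (A : Finset ℕ) (h : A.Nonempty),
      GreedySet (fun n => xs n f) A →
      ‖(A.inf' h fun n => |xs n f|) • ∑ n ∈ A, sgn (xs n f) • x n‖ ≤ C₀ * ‖f‖)
    (A : Finset ℕ) (ε : ℕ → ℝ) (hε : ∀ n, ε n = 1 ∨ ε n = -1) :
    ‖∑ n ∈ A, ε n • x n‖ ≤ 2 * C₀ * ‖∑ n ∈ A, x n‖ := by
  have hsplit : ∑ n ∈ A, ε n • x n
      = ∑ n ∈ A.filter (fun n => ε n = 1), ε n • x n
        + ∑ n ∈ A.filter (fun n => ¬ (ε n = 1)), ε n • x n :=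
    (Finset.sum_filter_add_sum_filter_not A _ _).symm
  have h1 : ∑ n ∈ A.filter (fun n => ε n = 1), ε n • x n
      = ∑ n ∈ A.filter (fun n => ε n = 1), x n := by
    apply Finset.sum_congr rfl
    intro n hn
    rw [(Finset.mem_filter.mp hn).2, one_smul]
  have h2 : ∑ n ∈ A.filter (fun n => ¬ (ε n = 1)), ε n • x n
      = - ∑ n ∈ A.filter (fun n => ¬ (ε n = 1)), x n := by
    rw [← Finset.sum_neg_distrib]
    apply Finset.sum_congr rfl
    intro n hn
    have : ε n = -1 := by
      rcases hε n with h | h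
      · exact absurd h (Finset.mem_filter.mp hn).2
      · exact h
    rw [this, neg_smul, one_smul]
  calc ‖∑ n ∈ A, ε n • x n‖
      ≤ ‖∑ n ∈ A.filter (fun n => ε n = 1), x n‖
        + ‖∑ n ∈ A.filter (fun n => ¬ (ε n = 1)), x n‖ := by
        rw [hsplit, h1, h2]
        exact le_trans (norm_add_le _ _) (by rw [norm_neg])
    _ ≤ C₀ * ‖∑ n ∈ A, x n‖ + C₀ * ‖∑ n ∈ A, x n‖ :=
        add_le_add (L1 hb hC₀ htr _ A (Finset.filter_subset _ _))
          (L1 hb hC₀ htr _ A (Finset.filter_subset _ _))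
    _ = 2 * C₀ * ‖∑ n ∈ A, x n‖ := by ring

lemma coefBound (hb : ∀ m n, xs m (x n) = if m = n then (1:ℝ) else 0)
    (hdense : ∀ f : X, ∀ ε > 0, ∃ (A : Finset ℕ) (c : ℕ → ℝ), ‖f - ∑ n ∈ A, c n • x n‖ < ε)
    {bd : ℝ} (hbd : ∀ n, ‖xs n‖ ≤ bd)
    {C₀ : ℝ} (hC₀ : 1 ≤ C₀)
    (htr : ∀ (f : X) (A : Finset ℕ) (h : A.Nonempty),
      GreedySet (fun n => xs n f) A →
      ‖(A.inf' h fun n => |xs n f|) • ∑ n ∈ A, sgn (xs n f) • x n‖ ≤ C₀ * ‖f‖)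
    (w : ℕ → ℝ) (hw : ∀ k, 1 ≤ k → 0 < w k)
    (hwm : ∀ i j, 1 ≤ i → i ≤ j → w i ≤ w j)
    {c' : ℝ} (hc' : 0 < c')
    (hlow : ∀ S : Finset ℕ, S.Nonempty → c' * w S.card ≤ ‖∑ n ∈ S, x n‖)
    (g : X) (A : Finset ℕ) :
    ∑ n ∈ A, (xs n g)^2
      ≤ (2*C₀^3/c')^2 * (∑ j ∈ Finset.Icc 1 A.card, (1 / w j)^2) * ‖g‖^2 := by
  set E : ℝ := 2*C₀^3/c' with hE
  have hC₀0 : (0:ℝ) < C₀ := lt_of_lt_of_le one_pos hC₀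
  have hE0 : 0 < E := by rw [hE]; positivity
  set ρ : ℕ → ℕ := fun n => (A.filter fun k => |xs n g| ≤ |xs k g|).card with hρ
  have hρ1 : ∀ n ∈ A, 1 ≤ ρ n := by
    intro n hn
    apply Finset.card_pos.mpr
    exact ⟨n, Finset.mem_filter.mpr ⟨hn, le_refl _⟩⟩
  have hP : ∀ j, (A.filter fun n => ρ n ≤ j).card ≤ j := by
    intro j
    set B := A.filter fun n => ρ n ≤ j with hB
    rcases B.eq_empty_or_nonempty with hBe | hBne
    · rw [hBe]; simp
    · obtain ⟨nm, hnmB, hmin⟩ := B.exists_min_image (fun n => |xs n g|) hBne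
      have hsub : B ⊆ A.filter fun k => |xs nm g| ≤ |xs k g| := by
        intro n hn
        exact Finset.mem_filter.mpr ⟨(Finset.mem_filter.mp hn).1, hmin n hn⟩
      calc B.card ≤ (A.filter fun k => |xs nm g| ≤ |xs k g|).card := Finset.card_le_card hsub
        _ = ρ nm := rfl
        _ ≤ j := (Finset.mem_filter.mp hnmB).2
  have hterm : ∀ n ∈ A, (xs n g)^2 ≤ E^2 * (1 / w (ρ n))^2 * ‖g‖^2 := by
    intro n hn
    by_cases h0 : xs n g = 0
    · rw [h0]
      have : (0:ℝ)^2 = 0 := by norm_num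
      rw [this]
      positivity
    · have ht : 0 < |xs n g| := abs_pos.mpr h0
      set S := A.filter fun k => |xs n g| ≤ |xs k g| with hSdef
      have hSne : S.Nonempty := ⟨n, Finset.mem_filter.mpr ⟨hn, le_refl _⟩⟩
      have hScard : S.card = ρ n := rfl
      have h3 := L3 hb hdense hbd hC₀ htr g |xs n g| ht S
        (fun k hk => (Finset.mem_filter.mp hk).2)
      have hl := hlow S hSne
      rw [hScard] at hl
      have hwpos : 0 < w (ρ n) := hw _ (hρ1 n hn)
      have hchain : |xs n g| * (c' * w (ρ n)) ≤ 2 * C₀^3 * ‖g‖ :=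
        le_trans (mul_le_mul_of_nonneg_left hl (abs_nonneg _)) h3
      have hdiv : |xs n g| ≤ (2*C₀^3*‖g‖)/(c' * w (ρ n)) := by
        rw [le_div_iff₀ (by positivity)]
        exact hchain
      have heq : (2*C₀^3*‖g‖)/(c' * w (ρ n)) = E * ‖g‖ * (1 / w (ρ n)) := by
        rw [hE]
        field_simp
      have habs : |xs n g| ≤ E * ‖g‖ * (1 / w (ρ n)) := by rw [← heq]; exact hdiv
      have hsq := pow_le_pow_left₀ (abs_nonneg _) habs 2
      rw [sq_abs] at hsq
      calc (xs n g)^2 ≤ (E * ‖g‖ * (1 / w (ρ n)))^2 := hsq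
        _ = E^2 * (1 / w (ρ n))^2 * ‖g‖^2 := by ring
  have hu : ∀ i j, 1 ≤ i → i ≤ j → (1 / w j)^2 ≤ (1 / w i)^2 := by
    intro i j hi hij
    have hwi : 0 < w i := hw i hi
    have hwj : 0 < w j := hw j (le_trans hi hij)
    have : 1 / w j ≤ 1 / w i := one_div_le_one_div_of_le hwi (hwm i j hi hij)
    exact pow_le_pow_left₀ (by positivity) this 2
  calc ∑ n ∈ A, (xs n g)^2
      ≤ ∑ n ∈ A, E^2 * (1 / w (ρ n))^2 * ‖g‖^2 := Finset.sum_le_sum hterm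
    _ = E^2 * ‖g‖^2 * ∑ n ∈ A, (1 / w (ρ n))^2 := by
        rw [Finset.mul_sum]
        exact Finset.sum_congr rfl fun n _ => by ring
    _ ≤ E^2 * ‖g‖^2 * ∑ j ∈ Finset.Icc 1 A.card, (1 / w j)^2 := by
        apply mul_le_mul_of_nonneg_left _ (by positivity)
        exact comb _ hu ρ A hρ1 hP
    _ = E^2 * (∑ j ∈ Finset.Icc 1 A.card, (1 / w j)^2) * ‖g‖^2 := by ring


lemma GTmaster
    (hb : ∀ m n, xs m (x n) = if m = n then (1:ℝ) else 0)
    {D : ℝ} (hD : 0 ≤ D)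
    (hgt : ∀ T : X →L[ℝ] lp (fun _ : ℕ => ℝ) 2, ∀ (B : Finset ℕ) (f : ℕ → X),
      ∃ ε : ℕ → ℝ, (∀ k, ε k = 1 ∨ ε k = -1) ∧
        ∑ k ∈ B, ‖T (f k)‖ ≤ D * ‖T‖ * ‖∑ k ∈ B, ε k • f k‖)
    {C₀ : ℝ} (hC₀ : 1 ≤ C₀)
    (hsigns : ∀ (A : Finset ℕ) (ε : ℕ → ℝ), (∀ n, ε n = 1 ∨ ε n = -1) →
      ‖∑ n ∈ A, ε n • x n‖ ≤ 2 * C₀ * ‖∑ n ∈ A, x n‖)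
    (A : Finset ℕ) (R : ℝ) (hR : 0 ≤ R)
    (hcoef : ∀ g : X, ∑ n ∈ A, (xs n g)^2 ≤ R^2 * ‖g‖^2) :
    (A.card : ℝ) ≤ 2 * D * C₀ * R * ‖∑ n ∈ A, x n‖ := by
  set T : X →L[ℝ] lp (fun _ : ℕ => ℝ) 2 :=
    ∑ n ∈ A, (xs n).smulRight (lp.single 2 n (1:ℝ)) with hT
  have hTapp : ∀ g : X, T g = ∑ n ∈ A, lp.single 2 n (xs n g) := by
    intro g
    rw [hT, ContinuousLinearMap.sum_apply]
    apply Finset.sum_congr rfl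
    intro n _
    rw [ContinuousLinearMap.smulRight_apply, ← lp.single_smul, smul_eq_mul, mul_one]
  have hTsq : ∀ g : X, ‖T g‖^2 = ∑ n ∈ A, (xs n g)^2 := by
    intro g
    rw [hTapp g]
    have h := lp.norm_sum_single (p := 2) (E := fun _ : ℕ => ℝ) (by norm_num)
      (fun n => xs n g) A
    rw [ENNReal.toReal_ofNat] at h
    rw [← Real.rpow_two, h]
    apply Finset.sum_congr rfl
    intro n _
    rw [Real.norm_eq_abs, Real.rpow_two, sq_abs]
  have hTle : ‖T‖ ≤ R := by
    apply ContinuousLinearMap.opNorm_le_bound _ hR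
    intro g
    have h1 : ‖T g‖^2 ≤ (R * ‖g‖)^2 := by
      rw [hTsq g]; calc ∑ n ∈ A, (xs n g)^2 ≤ R^2 * ‖g‖^2 := hcoef g
        _ = (R * ‖g‖)^2 := by ring
    nlinarith [norm_nonneg (T g), mul_nonneg hR (norm_nonneg g)]
  have hTlow : ∀ k ∈ A, (1:ℝ) ≤ ‖T (x k)‖ := by
    intro k hk
    have hcoord : (↑(T (x k)) : ∀ _ : ℕ, ℝ) k = 1 := by
      rw [hTapp, lp.coeFn_sum]
      simp only [lp.single_apply, Finset.sum_apply]
      simp only [Pi.single_apply, Finset.sum_ite_eq, Finset.sum_ite_eq']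
      simp [hk, hb k k]
    have := lp.norm_apply_le_norm (p := 2) (by norm_num) (T (x k)) k
    rw [hcoord] at this
    simpa using this
  obtain ⟨ε, hεs, hineq⟩ := hgt T A x
  have hlhs : (A.card : ℝ) ≤ ∑ k ∈ A, ‖T (x k)‖ := by
    calc (A.card : ℝ) = ∑ _k ∈ A, (1:ℝ) := by rw [Finset.sum_const]; simp
      _ ≤ ∑ k ∈ A, ‖T (x k)‖ := Finset.sum_le_sum hTlow
  have hC₀0 : (0:ℝ) ≤ C₀ := le_trans zero_le_one hC₀
  calc (A.card : ℝ) ≤ D * ‖T‖ * ‖∑ k ∈ A, ε k • x k‖ := le_trans hlhs hineq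
    _ ≤ D * R * ‖∑ k ∈ A, ε k • x k‖ := by
        apply mul_le_mul_of_nonneg_right _ (norm_nonneg _)
        exact mul_le_mul_of_nonneg_left hTle hD
    _ ≤ D * R * (2 * C₀ * ‖∑ n ∈ A, x n‖) := by
        apply mul_le_mul_of_nonneg_left _ (mul_nonneg hD hR)
        exact hsigns A ε hεs
    _ = 2 * D * C₀ * R * ‖∑ n ∈ A, x n‖ := by ring


end


/-- A basis of a GT space with the bounded restricted truncation operator
property is democratic, with both democracy functions of order `m`. -/
theorem stmt11 {X : Type*} [NormedAddCommGroup X] [NormedSpace ℝ X] [CompleteSpace X]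
    (hGT : IsGTSpace X) (x : ℕ → X) (xs : ℕ → X →L[ℝ] ℝ)
    (hbasis : IsXBasis x xs) (htrunc : BRTP x xs) :
    ∃ c C : ℝ, 0 < c ∧ c ≤ C ∧
      (∀ m : ℕ, 1 ≤ m → ∀ A : Finset ℕ, m ≤ A.card → c * (m : ℝ) ≤ ‖∑ n ∈ A, x n‖) ∧
      (∀ m : ℕ, 1 ≤ m → ∀ A : Finset ℕ, A.card ≤ m → ‖∑ n ∈ A, x n‖ ≤ C * (m : ℝ)) ∧
      (∃ D ≥ (1 : ℝ), ∀ A B : Finset ℕ, A.card = B.card →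
        ‖∑ n ∈ A, x n‖ ≤ D * ‖∑ n ∈ B, x n‖) := by
  classical
  obtain ⟨C₀, hC₀, htr⟩ := htrunc
  obtain ⟨D₀, hgt₀⟩ := hGT
  obtain ⟨D, hDdef⟩ : ∃ y : ℝ, y = max D₀ 1 := ⟨_, rfl⟩
  have hD1 : (1:ℝ) ≤ D := by rw [hDdef]; exact le_max_right _ _
  have hD0 : (0:ℝ) ≤ D := by linarith
  have hgt : ∀ T : X →L[ℝ] lp (fun _ : ℕ => ℝ) 2, ∀ (B : Finset ℕ) (f : ℕ → X),
      ∃ ε : ℕ → ℝ, (∀ k, ε k = 1 ∨ ε k = -1) ∧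
        ∑ k ∈ B, ‖T (f k)‖ ≤ D * ‖T‖ * ‖∑ k ∈ B, ε k • f k‖ := by
    intro T B f
    obtain ⟨ε, hs, hi⟩ := hgt₀ T B f
    refine ⟨ε, hs, le_trans hi ?_⟩
    rw [hDdef]
    apply mul_le_mul_of_nonneg_right _ (norm_nonneg _)
    exact mul_le_mul_of_nonneg_right (le_max_left _ _) (norm_nonneg _)
  have hb := hbasis.biorth
  have hdense := hbasis.dense
  obtain ⟨bd₀, hbd₀⟩ := hbasis.dual_ub
  obtain ⟨bd, hbddef⟩ : ∃ y : ℝ, y = max bd₀ 1 := ⟨_, rfl⟩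
  have hbd : ∀ n, ‖xs n‖ ≤ bd := fun n => by
    rw [hbddef]; exact le_trans (hbd₀ n) (le_max_left _ _)
  have hbd1 : (1:ℝ) ≤ bd := by rw [hbddef]; exact le_max_right _ _
  have hbd0 : (0:ℝ) < bd := lt_of_lt_of_le one_pos hbd1
  have hC₀0 : (0:ℝ) < C₀ := lt_of_lt_of_le one_pos hC₀
  have hsigns : ∀ (A : Finset ℕ) (ε : ℕ → ℝ), (∀ n, ε n = 1 ∨ ε n = -1) →
      ‖∑ n ∈ A, ε n • x n‖ ≤ 2 * C₀ * ‖∑ n ∈ A, x n‖ :=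
    fun A ε hε => L2b hb hC₀ htr A ε hε
  -- Round 1 : lower bound of order √m
  obtain ⟨K₁, hK₁def⟩ : ∃ y : ℝ, y = 2 * D * C₀ * bd := ⟨_, rfl⟩
  have hDpos : (0:ℝ) < D := lt_of_lt_of_le one_pos hD1
  have hK₁pos : 0 < K₁ := by
    rw [hK₁def]
    exact mul_pos (mul_pos (mul_pos two_pos hDpos) hC₀0) hbd0
  have round1 : ∀ A : Finset ℕ, A.Nonempty →
      (1/K₁) * Real.sqrt A.card ≤ ‖∑ n ∈ A, x n‖ := by
    intro A hA
    have hcoef : ∀ g : X, ∑ n ∈ A, (xs n g)^2 ≤ (bd * Real.sqrt A.card)^2 * ‖g‖^2 := by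
      intro g
      have h1 : ∀ n ∈ A, (xs n g)^2 ≤ bd^2 * ‖g‖^2 := by
        intro n _
        have h2 : |xs n g| ≤ bd * ‖g‖ := by
          calc |xs n g| = ‖xs n g‖ := (Real.norm_eq_abs _).symm
            _ ≤ ‖xs n‖ * ‖g‖ := (xs n).le_opNorm g
            _ ≤ bd * ‖g‖ := mul_le_mul_of_nonneg_right (hbd n) (norm_nonneg g)
        nlinarith [abs_nonneg (xs n g), sq_abs (xs n g)]
      calc ∑ n ∈ A, (xs n g)^2 ≤ ∑ _n ∈ A, bd^2 * ‖g‖^2 := Finset.sum_le_sum h1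
        _ = (A.card : ℝ) * (bd^2 * ‖g‖^2) := by rw [Finset.sum_const, nsmul_eq_mul]
        _ = (bd * Real.sqrt A.card)^2 * ‖g‖^2 := by
            rw [mul_pow, Real.sq_sqrt (by positivity)]; ring
    have hmain := GTmaster hb hD0 hgt hC₀ hsigns A (bd * Real.sqrt A.card)
      (mul_nonneg (le_of_lt hbd0) (Real.sqrt_nonneg _)) hcoef
    have hm1 : 1 ≤ A.card := Finset.card_pos.mpr hA
    have hmpos : (0:ℝ) < A.card := by exact_mod_cast hm1
    have hsqpos : 0 < Real.sqrt A.card := Real.sqrt_pos.mpr hmpos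
    have h2 : Real.sqrt A.card * Real.sqrt A.card
        ≤ Real.sqrt A.card * (K₁ * ‖∑ n ∈ A, x n‖) := by
      rw [Real.mul_self_sqrt (by positivity)]
      calc (A.card : ℝ) ≤ 2 * D * C₀ * (bd * Real.sqrt A.card) * ‖∑ n ∈ A, x n‖ := hmain
        _ = Real.sqrt A.card * (K₁ * ‖∑ n ∈ A, x n‖) := by rw [hK₁def]; ring
    have h3 : Real.sqrt A.card ≤ K₁ * ‖∑ n ∈ A, x n‖ :=
      le_of_mul_le_mul_left h2 hsqpos
    rw [show (1/K₁) * Real.sqrt A.card = Real.sqrt A.card / K₁ by ring,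
      div_le_iff₀ hK₁pos]
    linarith [h3]
  obtain ⟨c₁, hc₁def⟩ : ∃ y : ℝ, y = 1/K₁ := ⟨_, rfl⟩
  have hc₁pos : 0 < c₁ := by rw [hc₁def]; exact one_div_pos.mpr hK₁pos
  -- Round 2 : lower bound of order m^(3/4)
  obtain ⟨E₁, hE₁def⟩ : ∃ y : ℝ, y = 2 * C₀^3 / c₁ := ⟨_, rfl⟩
  have hE₁pos : 0 < E₁ := by
    rw [hE₁def]
    exact div_pos (by nlinarith [pow_pos hC₀0 3]) hc₁pos
  obtain ⟨K₂, hK₂def⟩ : ∃ y : ℝ, y = 2 * D * C₀ * (E₁ * Real.sqrt 2) := ⟨_, rfl⟩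
  have hK₂pos : 0 < K₂ := by
    rw [hK₂def]
    have h2 : (0:ℝ) < Real.sqrt 2 := Real.sqrt_pos.mpr (by norm_num)
    exact mul_pos (mul_pos (mul_pos two_pos hDpos) hC₀0) (mul_pos hE₁pos h2)
  obtain ⟨c₂, hc₂def⟩ : ∃ y : ℝ, y = 1/K₂ := ⟨_, rfl⟩
  have hc₂pos : 0 < c₂ := by rw [hc₂def]; exact one_div_pos.mpr hK₂pos
  have round2 : ∀ A : Finset ℕ, A.Nonempty →
      c₂ * Real.sqrt (A.card * Real.sqrt A.card) ≤ ‖∑ n ∈ A, x n‖ := by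
    intro A hA
    have hm1 : 1 ≤ A.card := Finset.card_pos.mpr hA
    have hmpos : (0:ℝ) < A.card := by exact_mod_cast hm1
    have hw : ∀ k : ℕ, 1 ≤ k → 0 < Real.sqrt k := by
      intro k hk
      apply Real.sqrt_pos.mpr
      exact_mod_cast hk
    have hwm : ∀ i j : ℕ, 1 ≤ i → i ≤ j → Real.sqrt i ≤ Real.sqrt j := by
      intro i j _ hij
      apply Real.sqrt_le_sqrt
      exact_mod_cast hij
    have hlow : ∀ S : Finset ℕ, S.Nonempty → c₁ * Real.sqrt S.card ≤ ‖∑ n ∈ S, x n‖ := by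
      intro S hS
      rw [hc₁def]
      exact round1 S hS
    have hcb := coefBound hb hdense hbd hC₀ htr (fun k => Real.sqrt k) hw hwm hc₁pos hlow
    have hsum : ∑ j ∈ Finset.Icc 1 A.card, (1 / Real.sqrt j)^2 ≤ 2 * Real.sqrt A.card := by
      have heq : ∀ j ∈ Finset.Icc 1 A.card, (1 / Real.sqrt j)^2 = (1:ℝ)/j := by
        intro j hj
        rw [div_pow, one_pow, Real.sq_sqrt (by positivity)]
      rw [Finset.sum_congr rfl heq]
      exact sum_one_div_le A.card
    have hcoef : ∀ g : X, ∑ n ∈ A, (xs n g)^2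
        ≤ (E₁ * Real.sqrt (2 * Real.sqrt A.card))^2 * ‖g‖^2 := by
      intro g
      calc ∑ n ∈ A, (xs n g)^2
          ≤ (2*C₀^3/c₁)^2 * (∑ j ∈ Finset.Icc 1 A.card, (1 / Real.sqrt j)^2) * ‖g‖^2 :=
            hcb g A
        _ ≤ (2*C₀^3/c₁)^2 * (2 * Real.sqrt A.card) * ‖g‖^2 := by
            apply mul_le_mul_of_nonneg_right _ (by positivity)
            exact mul_le_mul_of_nonneg_left hsum (by positivity)
        _ = (E₁ * Real.sqrt (2 * Real.sqrt A.card))^2 * ‖g‖^2 := by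
            rw [mul_pow, Real.sq_sqrt (by positivity), hE₁def]
    have hmain := GTmaster hb hD0 hgt hC₀ hsigns A (E₁ * Real.sqrt (2 * Real.sqrt A.card))
      (mul_nonneg (le_of_lt hE₁pos) (Real.sqrt_nonneg _)) hcoef
    obtain ⟨q, hqdef⟩ : ∃ y : ℝ, y = Real.sqrt (Real.sqrt A.card) := ⟨_, rfl⟩
    have hq2 : q^2 = Real.sqrt A.card := by
      rw [hqdef]; exact Real.sq_sqrt (Real.sqrt_nonneg _)
    have hq4 : q^4 = (A.card : ℝ) := by
      have h1 : q^4 = (q^2)^2 := by ring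
      rw [h1, hq2, Real.sq_sqrt (by positivity)]
    have hqpos : 0 < q := by
      rw [hqdef]; exact Real.sqrt_pos.mpr (Real.sqrt_pos.mpr hmpos)
    have hsplit : Real.sqrt (2 * Real.sqrt A.card) = Real.sqrt 2 * q := by
      rw [hqdef]; rw [Real.sqrt_mul (by norm_num)]
    have hw2 : Real.sqrt (A.card * Real.sqrt A.card) = q^3 := by
      have h6 : (A.card : ℝ) * Real.sqrt A.card = (q^3)^2 := by
        rw [← hq2, ← hq4]; ring
      rw [h6, Real.sqrt_sq (pow_nonneg (le_of_lt hqpos) 3)]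
    have h2 : q * q^3 ≤ q * (K₂ * ‖∑ n ∈ A, x n‖) := by
      calc q * q^3 = q^4 := by ring
        _ = (A.card : ℝ) := hq4
        _ ≤ 2 * D * C₀ * (E₁ * Real.sqrt (2 * Real.sqrt A.card)) * ‖∑ n ∈ A, x n‖ := hmain
        _ = q * (K₂ * ‖∑ n ∈ A, x n‖) := by rw [hsplit, hK₂def]; ring
    have h3 : q^3 ≤ K₂ * ‖∑ n ∈ A, x n‖ := le_of_mul_le_mul_left h2 hqpos
    rw [hw2, hc₂def, show (1/K₂) * q^3 = q^3 / K₂ by ring, div_le_iff₀ hK₂pos]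
    linarith [h3]
  -- Round 3 : lower bound of order m
  obtain ⟨E₂, hE₂def⟩ : ∃ y : ℝ, y = 2 * C₀^3 / c₂ := ⟨_, rfl⟩
  have hE₂pos : 0 < E₂ := by
    rw [hE₂def]
    exact div_pos (by nlinarith [pow_pos hC₀0 3]) hc₂pos
  obtain ⟨K₃, hK₃def⟩ : ∃ y : ℝ, y = 2 * D * C₀ * (E₂ * Real.sqrt 3) := ⟨_, rfl⟩
  have hK₃pos : 0 < K₃ := by
    rw [hK₃def]
    have h3 : (0:ℝ) < Real.sqrt 3 := Real.sqrt_pos.mpr (by norm_num)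
    exact mul_pos (mul_pos (mul_pos two_pos hDpos) hC₀0) (mul_pos hE₂pos h3)
  obtain ⟨c₃, hc₃def⟩ : ∃ y : ℝ, y = 1/K₃ := ⟨_, rfl⟩
  have hc₃pos : 0 < c₃ := by rw [hc₃def]; exact one_div_pos.mpr hK₃pos
  have round3 : ∀ A : Finset ℕ, c₃ * A.card ≤ ‖∑ n ∈ A, x n‖ := by
    intro A
    rcases A.eq_empty_or_nonempty with rfl | hA
    · simp
    have hm1 : 1 ≤ A.card := Finset.card_pos.mpr hA
    have hmpos : (0:ℝ) < A.card := by exact_mod_cast hm1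
    have hw : ∀ k : ℕ, 1 ≤ k → 0 < Real.sqrt (k * Real.sqrt k) := by
      intro k hk
      have hkpos : (0:ℝ) < k := by exact_mod_cast hk
      have : (0:ℝ) < Real.sqrt k := Real.sqrt_pos.mpr hkpos
      apply Real.sqrt_pos.mpr
      positivity
    have hwm : ∀ i j : ℕ, 1 ≤ i → i ≤ j →
        Real.sqrt (i * Real.sqrt i) ≤ Real.sqrt (j * Real.sqrt j) := by
      intro i j _ hij
      have hij' : (i:ℝ) ≤ j := by exact_mod_cast hij
      apply Real.sqrt_le_sqrt
      apply mul_le_mul hij' (Real.sqrt_le_sqrt hij') (Real.sqrt_nonneg _) (by positivity)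
    have hlow : ∀ S : Finset ℕ, S.Nonempty →
        c₂ * Real.sqrt (S.card * Real.sqrt S.card) ≤ ‖∑ n ∈ S, x n‖ := round2
    have hcb := coefBound hb hdense hbd hC₀ htr
      (fun k => Real.sqrt (k * Real.sqrt k)) hw hwm hc₂pos hlow
    have hsum : ∑ j ∈ Finset.Icc 1 A.card, (1 / Real.sqrt (j * Real.sqrt j))^2 ≤ 3 := by
      have heq : ∀ j ∈ Finset.Icc 1 A.card,
          (1 / Real.sqrt (j * Real.sqrt j))^2 = 1/((j:ℝ) * Real.sqrt j) := by
        intro j hj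
        have hj1 : 1 ≤ j := (Finset.mem_Icc.mp hj).1
        have hjpos : (0:ℝ) < j := by exact_mod_cast hj1
        rw [div_pow, one_pow, Real.sq_sqrt (by positivity)]
      rw [Finset.sum_congr rfl heq]
      exact sum_pow32_le A.card
    have hcoef : ∀ g : X, ∑ n ∈ A, (xs n g)^2
        ≤ (E₂ * Real.sqrt 3)^2 * ‖g‖^2 := by
      intro g
      calc ∑ n ∈ A, (xs n g)^2
          ≤ (2*C₀^3/c₂)^2 * (∑ j ∈ Finset.Icc 1 A.card, (1 / Real.sqrt (j * Real.sqrt j))^2) * ‖g‖^2 :=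
            hcb g A
        _ ≤ (2*C₀^3/c₂)^2 * 3 * ‖g‖^2 := by
            apply mul_le_mul_of_nonneg_right _ (by positivity)
            exact mul_le_mul_of_nonneg_left hsum (by positivity)
        _ = (E₂ * Real.sqrt 3)^2 * ‖g‖^2 := by
            rw [mul_pow, Real.sq_sqrt (by norm_num), hE₂def]
    have hmain := GTmaster hb hD0 hgt hC₀ hsigns A (E₂ * Real.sqrt 3)
      (mul_nonneg (le_of_lt hE₂pos) (Real.sqrt_nonneg _)) hcoef
    have h3 : (A.card : ℝ) ≤ K₃ * ‖∑ n ∈ A, x n‖ := by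
      calc (A.card : ℝ) ≤ 2 * D * C₀ * (E₂ * Real.sqrt 3) * ‖∑ n ∈ A, x n‖ := hmain
        _ = K₃ * ‖∑ n ∈ A, x n‖ := by rw [hK₃def]
    rw [hc₃def, show (1/K₃) * (A.card:ℝ) = (A.card:ℝ) / K₃ by ring, div_le_iff₀ hK₃pos]
    linarith [h3]
  -- upper bound constant
  obtain ⟨β₀, hβ₀⟩ := hbasis.norm_ub
  obtain ⟨Cu, hCudef⟩ : ∃ y : ℝ, y = max β₀ c₃ := ⟨_, rfl⟩
  have hCuc : c₃ ≤ Cu := by rw [hCudef]; exact le_max_right _ _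
  have hCupos : 0 < Cu := lt_of_lt_of_le hc₃pos hCuc
  have hupper : ∀ A : Finset ℕ, ‖∑ n ∈ A, x n‖ ≤ Cu * A.card := by
    intro A
    calc ‖∑ n ∈ A, x n‖ ≤ ∑ n ∈ A, ‖x n‖ := norm_sum_le _ _
      _ ≤ ∑ _n ∈ A, Cu := Finset.sum_le_sum
          (fun n _ => by rw [hCudef]; exact le_trans (hβ₀ n) (le_max_left _ _))
      _ = (A.card : ℝ) * Cu := by rw [Finset.sum_const, nsmul_eq_mul]
      _ = Cu * A.card := by ring
  refine ⟨c₃, Cu, hc₃pos, hCuc, ?_, ?_, ?_⟩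
  · -- lower democracy bound
    intro m hm A hmA
    have h1 : (m:ℝ) ≤ (A.card : ℝ) := by exact_mod_cast hmA
    calc c₃ * m ≤ c₃ * A.card := mul_le_mul_of_nonneg_left h1 (le_of_lt hc₃pos)
      _ ≤ ‖∑ n ∈ A, x n‖ := round3 A
  · -- upper democracy bound
    intro m _ A hAm
    have h1 : (A.card : ℝ) ≤ (m:ℝ) := by exact_mod_cast hAm
    calc ‖∑ n ∈ A, x n‖ ≤ Cu * A.card := hupper A
      _ ≤ Cu * m := mul_le_mul_of_nonneg_left h1 (le_of_lt hCupos)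
  · -- democracy
    refine ⟨max 1 (Cu/c₃), le_max_left _ _, ?_⟩
    intro A B hcard
    rcases B.eq_empty_or_nonempty with rfl | hB
    · have hA : A = ∅ := Finset.card_eq_zero.mp (by simpa using hcard)
      subst hA
      simp
    · have hCc : 0 ≤ Cu / c₃ := le_of_lt (div_pos hCupos hc₃pos)
      calc ‖∑ n ∈ A, x n‖ ≤ Cu * A.card := hupper A
        _ = (Cu/c₃) * (c₃ * B.card) := by
            rw [hcard, ← mul_assoc, div_mul_cancel₀ Cu (ne_of_gt hc₃pos)]
        _ ≤ (Cu/c₃) * ‖∑ n ∈ B, x n‖ :=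
            mul_le_mul_of_nonneg_left (round3 B) hCc
        _ ≤ (max 1 (Cu/c₃)) * ‖∑ n ∈ B, x n‖ :=
            mul_le_mul_of_nonneg_right (le_max_right _ _) (norm_nonneg _)
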